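/- Let f ∈ ℝ[ω₁,…,ω_k] be a k-fold invariant of SO(3), i.e. f(Aω₁,…,Aω_k) = f(ω₁,…,ω_k) for all A with A·Aᵀ = I and det A = 1, where each ωᵢ ∈ ℝ³. Define the dualisation f̂ on k-tuples of dual vectors ûᵢ = ωᵢ + ε·vᵢ ∈ 𝔻³ by f̂(û₁,…,û_k) = f(ω₁,…,ω_k) + ε·Σ_{i=1}^{k} ∇_{ωᵢ}f(ω₁,…,ω_k)·vᵢ. Then for every dual matrix Â = A₀ + ε·A₁ with Â·Âᵀ = I and det Â = 1 over 𝔻, one has f̂(Â·û₁, …, Â·û_k) = f̂(û₁,…,û_k). -/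

import Mathlib

open Matrix MvPolynomial Real

/-- The dual matrix `Â = A₀ + ε·A₁` over the dual numbers `𝔻 = ℝ[ε]/(ε²)`. -/
noncomputable def dualMat (A₀ A₁ : Matrix (Fin 3) (Fin 3) ℝ) :
    Matrix (Fin 3) (Fin 3) (DualNumber ℝ) :=
  A₀.map (algebraMap ℝ (DualNumber ℝ)) +
    (DualNumber.eps : DualNumber ℝ) • A₁.map (algebraMap ℝ (DualNumber ℝ))

/-- The dualisation `f̂` of a polynomial `f` in `k` vector arguments, evaluated at the
`k`-tuple of dual vectors `ûᵢ = ωᵢ + ε·vᵢ`: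
`f̂(û₁,…,û_k) = f(ω₁,…,ω_k) + ε·Σᵢ ∇_{ωᵢ}f(ω₁,…,ω_k)·vᵢ`. -/
noncomputable def fhat {k : ℕ} (f : MvPolynomial (Fin k × Fin 3) ℝ)
    (ω v : Fin k → Fin 3 → ℝ) : DualNumber ℝ :=
  algebraMap ℝ (DualNumber ℝ) (MvPolynomial.eval (fun p => ω p.1 p.2) f) +
    DualNumber.eps *
      algebraMap ℝ (DualNumber ℝ)
        (∑ i : Fin k, ∑ r : Fin 3,
          MvPolynomial.eval (fun p => ω p.1 p.2) (MvPolynomial.pderiv (i, r) f) * v i r)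

noncomputable def Rm (r s : Fin 3) (t : ℝ) : Matrix (Fin 3) (Fin 3) ℝ :=
  1 + (Real.cos t - 1) • (Matrix.single r r (1:ℝ) + Matrix.single s s 1)
    + (Real.sin t) • (Matrix.single s r (1:ℝ) - Matrix.single r s 1)

lemma Rm_zero (r s : Fin 3) : Rm r s 0 = 1 := by simp [Rm]

lemma Rm_explicit_01 (t : ℝ) :
    Rm 0 1 t = !![Real.cos t, -Real.sin t, 0; Real.sin t, Real.cos t, 0; 0, 0, 1] := by
  ext a b; fin_cases a <;> fin_cases b <;> simp [Rm, Matrix.one_apply, Matrix.single, Matrix.vecHead, Matrix.vecTail]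

lemma Rm_explicit_02 (t : ℝ) :
    Rm 0 2 t = !![Real.cos t, 0, -Real.sin t; 0, 1, 0; Real.sin t, 0, Real.cos t] := by
  ext a b; fin_cases a <;> fin_cases b <;> simp [Rm, Matrix.one_apply, Matrix.single, Matrix.vecHead, Matrix.vecTail]

lemma Rm_explicit_12 (t : ℝ) :
    Rm 1 2 t = !![1, 0, 0; 0, Real.cos t, -Real.sin t; 0, Real.sin t, Real.cos t] := by
  ext a b; fin_cases a <;> fin_cases b <;> simp [Rm, Matrix.one_apply, Matrix.single, Matrix.vecHead, Matrix.vecTail]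

lemma so3_01 (t : ℝ) : Rm 0 1 t * (Rm 0 1 t)ᵀ = 1 ∧ (Rm 0 1 t).det = 1 := by
  have h := sin_sq_add_cos_sq t
  rw [Rm_explicit_01]
  constructor
  · rw [show (!![Real.cos t, -Real.sin t, 0; Real.sin t, Real.cos t, 0; 0, 0, 1])ᵀ
        = !![Real.cos t, Real.sin t, 0; -Real.sin t, Real.cos t, 0; 0, 0, 1] by
      ext a b; fin_cases a <;> fin_cases b <;> rfl]
    ext a b
    fin_cases a <;> fin_cases b <;>
      simp [Matrix.mul_apply, Fin.sum_univ_three, Matrix.one_apply, Matrix.vecHead, Matrix.vecTail] <;> nlinarith [h]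
  · rw [Matrix.det_fin_three]; simp; nlinarith [h]

lemma so3_02 (t : ℝ) : Rm 0 2 t * (Rm 0 2 t)ᵀ = 1 ∧ (Rm 0 2 t).det = 1 := by
  have h := sin_sq_add_cos_sq t
  rw [Rm_explicit_02]
  constructor
  · rw [show (!![Real.cos t, 0, -Real.sin t; 0, 1, 0; Real.sin t, 0, Real.cos t])ᵀ
        = !![Real.cos t, 0, Real.sin t; 0, 1, 0; -Real.sin t, 0, Real.cos t] by
      ext a b; fin_cases a <;> fin_cases b <;> rfl]
    ext a b
    fin_cases a <;> fin_cases b <;>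
      simp [Matrix.mul_apply, Fin.sum_univ_three, Matrix.one_apply, Matrix.vecHead, Matrix.vecTail] <;> nlinarith [h]
  · rw [Matrix.det_fin_three]; simp; nlinarith [h]

lemma so3_12 (t : ℝ) : Rm 1 2 t * (Rm 1 2 t)ᵀ = 1 ∧ (Rm 1 2 t).det = 1 := by
  have h := sin_sq_add_cos_sq t
  rw [Rm_explicit_12]
  constructor
  · rw [show (!![1, 0, 0; 0, Real.cos t, -Real.sin t; 0, Real.sin t, Real.cos t])ᵀ
        = !![1, 0, 0; 0, Real.cos t, Real.sin t; 0, -Real.sin t, Real.cos t] by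
      ext a b; fin_cases a <;> fin_cases b <;> rfl]
    ext a b
    fin_cases a <;> fin_cases b <;>
      simp [Matrix.mul_apply, Fin.sum_univ_three, Matrix.one_apply, Matrix.vecHead, Matrix.vecTail] <;> nlinarith [h]
  · rw [Matrix.det_fin_three]; simp; nlinarith [h]


lemma rot_deriv (r s a b : Fin 3) :
    HasDerivAt (fun t => Rm r s t a b)
      (((Matrix.single s r (1:ℝ) - Matrix.single r s 1 : Matrix (Fin 3) (Fin 3) ℝ) a b)) 0 := by
  have h : (fun t => Rm r s t a b) = fun t =>
      (1 : Matrix (Fin 3) (Fin 3) ℝ) a b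
        + (Real.cos t - 1) * ((Matrix.single r r (1:ℝ) + Matrix.single s s 1 : Matrix (Fin 3) (Fin 3) ℝ) a b)
        + Real.sin t * ((Matrix.single s r (1:ℝ) - Matrix.single r s 1 : Matrix (Fin 3) (Fin 3) ℝ) a b) := by
    funext t; simp [Rm, Matrix.single]; split_ifs <;> ring
  rw [h]
  have h1 := (((Real.hasDerivAt_cos 0).sub_const 1).mul_const
      ((Matrix.single r r (1:ℝ) + Matrix.single s s 1 : Matrix (Fin 3) (Fin 3) ℝ) a b)).const_add
      ((1 : Matrix (Fin 3) (Fin 3) ℝ) a b)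
  have h2 := (Real.hasDerivAt_sin 0).mul_const
      ((Matrix.single s r (1:ℝ) - Matrix.single r s 1 : Matrix (Fin 3) (Fin 3) ℝ) a b)
  exact (h1.add h2).congr_deriv (by simp)

lemma evalDeriv {σ : Type*} [Fintype σ] [DecidableEq σ] (f : MvPolynomial σ ℝ)
    (φ : ℝ → σ → ℝ) (d : σ → ℝ) (t₀ : ℝ)
    (hφ : ∀ n, HasDerivAt (fun t => φ t n) (d n) t₀) :
    HasDerivAt (fun t => eval (φ t) f)
      (∑ n : σ, eval (φ t₀) (pderiv n f) * d n) t₀ := by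
  induction f using MvPolynomial.induction_on with
  | C a => simpa using hasDerivAt_const t₀ a
  | add p q hp hq =>
      have h := hp.add hq
      simp only [map_add, Finset.sum_add_distrib, add_mul]
      exact h
  | mul_X p n hp =>
      have h := hp.mul (hφ n)
      have heq : (∑ m : σ, eval (φ t₀) (pderiv m (p * X n)) * d m)
          = (∑ m : σ, eval (φ t₀) (pderiv m p) * d m) * φ t₀ n
            + eval (φ t₀) p * d n := by
        simp only [pderiv_mul, pderiv_X, map_add, MvPolynomial.eval_mul, eval_X, add_mul,
          Finset.sum_add_distrib, Finset.sum_mul]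
        congr 1
        · apply Finset.sum_congr rfl; intro m _; ring
        · have hsingle : ∀ m : σ, eval (φ t₀) p
              * eval (φ t₀) (Pi.single (M := fun _ : σ => MvPolynomial σ ℝ) m 1 n) * d m
              = if m = n then eval (φ t₀) p * d m else 0 := by
            intro m
            rcases eq_or_ne m n with h | h <;> simp [Pi.single_apply, h]
          rw [Finset.sum_congr rfl (fun m _ => hsingle m)]
          simp
      rw [heq]
      simp only [MvPolynomial.eval_mul, eval_X]
      exact h

lemma key {k : ℕ} (f : MvPolynomial (Fin k × Fin 3) ℝ)
    (hf : ∀ A : Matrix (Fin 3) (Fin 3) ℝ, A * Aᵀ = 1 → A.det = 1 →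
      ∀ ω : Fin k → Fin 3 → ℝ,
        MvPolynomial.eval (fun p => A.mulVec (ω p.1) p.2) f
          = MvPolynomial.eval (fun p => ω p.1 p.2) f)
    (w : Fin k → Fin 3 → ℝ) (r s : Fin 3)
    (hRm : ∀ t, Rm r s t * (Rm r s t)ᵀ = 1 ∧ (Rm r s t).det = 1) :
    ∑ i : Fin k, eval (fun p => w p.1 p.2) (pderiv (i, s) f) * w i r
      = ∑ i : Fin k, eval (fun p => w p.1 p.2) (pderiv (i, r) f) * w i s := by
  set N : Matrix (Fin 3) (Fin 3) ℝ := Matrix.single s r (1:ℝ) - Matrix.single r s 1 with hN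
  set φ : ℝ → (Fin k × Fin 3) → ℝ := fun t p => (Rm r s t).mulVec (w p.1) p.2 with hφdef
  have hφ0 : φ 0 = fun p => w p.1 p.2 := by
    funext p; simp [hφdef, Rm_zero, Matrix.one_mulVec]
  have hd : ∀ n : Fin k × Fin 3,
      HasDerivAt (fun t => φ t n) (N.mulVec (w n.1) n.2) 0 := by
    intro n
    have : (fun t => φ t n) = fun t => ∑ σ' : Fin 3, Rm r s t n.2 σ' * w n.1 σ' := by
      funext t; simp [hφdef, Matrix.mulVec, dotProduct]
    rw [this]
    have := HasDerivAt.fun_sum (u := Finset.univ)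
      (A := fun σ' t => Rm r s t n.2 σ' * w n.1 σ')
      (A' := fun σ' => N n.2 σ' * w n.1 σ')
      (fun σ' _ => (rot_deriv r s n.2 σ').mul_const (w n.1 σ'))
    simpa [Matrix.mulVec, dotProduct] using this
  have hder := evalDeriv f φ (fun n => N.mulVec (w n.1) n.2) 0 hd
  have hconst : (fun t => eval (φ t) f) = fun _ => eval (fun p => w p.1 p.2) f := by
    funext t
    have := hf (Rm r s t) (hRm t).1 (hRm t).2 w
    simpa [hφdef] using this
  have hzero : (∑ n : Fin k × Fin 3,
      eval (φ 0) (pderiv n f) * N.mulVec (w n.1) n.2) = 0 := by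
    have h2 : HasDerivAt (fun t => eval (φ t) f) 0 0 := by
      rw [hconst]; exact hasDerivAt_const _ _
    exact hder.unique h2
  rw [hφ0] at hzero
  rw [Fintype.sum_prod_type] at hzero
  have hmv : ∀ (i : Fin k) (ρ : Fin 3), N.mulVec (w i) ρ
      = (if ρ = s then w i r else 0) - (if ρ = r then w i s else 0) := by
    intro i ρ
    rw [hN, Matrix.sub_mulVec, Matrix.single_mulVec, Matrix.single_mulVec]
    simp [Function.update_apply, eq_comm, Pi.sub_apply]
  have : ∀ i : Fin k, ∑ ρ : Fin 3,
      eval (fun p => w p.1 p.2) (pderiv (i, ρ) f) * N.mulVec (w i) ρ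
      = eval (fun p => w p.1 p.2) (pderiv (i, s) f) * w i r
        - eval (fun p => w p.1 p.2) (pderiv (i, r) f) * w i s := by
    intro i
    simp only [hmv, mul_sub, mul_ite, mul_zero, Finset.sum_sub_distrib,
      Finset.sum_ite_eq', Finset.mem_univ, if_true]
  rw [Finset.sum_congr rfl (fun i _ => this i)] at hzero
  rw [Finset.sum_sub_distrib] at hzero
  linarith [hzero]

lemma c_symm {k : ℕ} (f : MvPolynomial (Fin k × Fin 3) ℝ)
    (hf : ∀ A : Matrix (Fin 3) (Fin 3) ℝ, A * Aᵀ = 1 → A.det = 1 →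
      ∀ ω : Fin k → Fin 3 → ℝ,
        MvPolynomial.eval (fun p => A.mulVec (ω p.1) p.2) f
          = MvPolynomial.eval (fun p => ω p.1 p.2) f)
    (w : Fin k → Fin 3 → ℝ) (ρ σ : Fin 3) :
    ∑ i : Fin k, eval (fun p => w p.1 p.2) (pderiv (i, ρ) f) * w i σ
      = ∑ i : Fin k, eval (fun p => w p.1 p.2) (pderiv (i, σ) f) * w i ρ := by
  fin_cases ρ <;> fin_cases σ
  · rfl
  · exact (key f hf w 0 1 so3_01).symm
  · exact (key f hf w 0 2 so3_02).symm
  · exact key f hf w 0 1 so3_01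
  · rfl
  · exact (key f hf w 1 2 so3_12).symm
  · exact key f hf w 0 2 so3_02
  · exact key f hf w 1 2 so3_12
  · rfl

lemma inf_inv {k : ℕ} (f : MvPolynomial (Fin k × Fin 3) ℝ)
    (hf : ∀ A : Matrix (Fin 3) (Fin 3) ℝ, A * Aᵀ = 1 → A.det = 1 →
      ∀ ω : Fin k → Fin 3 → ℝ,
        MvPolynomial.eval (fun p => A.mulVec (ω p.1) p.2) f
          = MvPolynomial.eval (fun p => ω p.1 p.2) f)
    (w : Fin k → Fin 3 → ℝ) (M : Matrix (Fin 3) (Fin 3) ℝ)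
    (hM : M + Mᵀ = 0) :
    ∑ i : Fin k, ∑ ρ : Fin 3,
      eval (fun p => w p.1 p.2) (pderiv (i, ρ) f) * M.mulVec (w i) ρ = 0 := by
  set c : Fin 3 → Fin 3 → ℝ := fun ρ σ =>
    ∑ i : Fin k, eval (fun p => w p.1 p.2) (pderiv (i, ρ) f) * w i σ with hc
  have hsum : ∑ i : Fin k, ∑ ρ : Fin 3,
      eval (fun p => w p.1 p.2) (pderiv (i, ρ) f) * M.mulVec (w i) ρ
      = ∑ ρ : Fin 3, ∑ σ : Fin 3, M ρ σ * c ρ σ := by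
    rw [Finset.sum_comm]
    apply Finset.sum_congr rfl; intro ρ _
    simp only [hc, Matrix.mulVec, dotProduct, Finset.mul_sum, Finset.sum_mul]
    rw [Finset.sum_comm]
    apply Finset.sum_congr rfl; intro σ _
    apply Finset.sum_congr rfl; intro i _
    ring
  rw [hsum]
  have hskew : ∀ ρ σ, M σ ρ = - M ρ σ := by
    intro ρ σ
    have := congrFun (congrFun hM σ) ρ
    simp [Matrix.transpose_apply] at this
    linarith
  have h2 : (∑ ρ : Fin 3, ∑ σ : Fin 3, M ρ σ * c ρ σ)
      = - ∑ ρ : Fin 3, ∑ σ : Fin 3, M ρ σ * c ρ σ := by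
    conv_lhs => rw [Finset.sum_comm]
    rw [← Finset.sum_neg_distrib]
    apply Finset.sum_congr rfl; intro ρ _
    rw [← Finset.sum_neg_distrib]
    apply Finset.sum_congr rfl; intro σ _
    rw [hskew ρ σ]
    simp only [hc]
    rw [c_symm f hf w σ ρ]
    ring
  linarith [h2]

lemma chain {k : ℕ} (f : MvPolynomial (Fin k × Fin 3) ℝ)
    (hf : ∀ A : Matrix (Fin 3) (Fin 3) ℝ, A * Aᵀ = 1 → A.det = 1 →
      ∀ ω : Fin k → Fin 3 → ℝ,
        MvPolynomial.eval (fun p => A.mulVec (ω p.1) p.2) f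
          = MvPolynomial.eval (fun p => ω p.1 p.2) f)
    (A₀ : Matrix (Fin 3) (Fin 3) ℝ) (h1 : A₀ * A₀ᵀ = 1) (h2 : A₀.det = 1)
    (ω v : Fin k → Fin 3 → ℝ) :
    ∑ n : Fin k × Fin 3,
        eval (fun p => A₀.mulVec (ω p.1) p.2) (pderiv n f) * A₀.mulVec (v n.1) n.2
      = ∑ n : Fin k × Fin 3,
        eval (fun p => ω p.1 p.2) (pderiv n f) * v n.1 n.2 := by
  set φ : ℝ → (Fin k × Fin 3) → ℝ :=
    fun t p => A₀.mulVec (ω p.1) p.2 + t * A₀.mulVec (v p.1) p.2 with hφdef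
  set ψ : ℝ → (Fin k × Fin 3) → ℝ :=
    fun t p => ω p.1 p.2 + t * v p.1 p.2 with hψdef
  have hφd : ∀ n : Fin k × Fin 3,
      HasDerivAt (fun t => φ t n) (A₀.mulVec (v n.1) n.2) 0 := by
    intro n
    simpa [hφdef] using ((hasDerivAt_id (0:ℝ)).mul_const (A₀.mulVec (v n.1) n.2)).const_add
      (A₀.mulVec (ω n.1) n.2)
  have hψd : ∀ n : Fin k × Fin 3,
      HasDerivAt (fun t => ψ t n) (v n.1 n.2) 0 := by
    intro n
    simpa [hψdef] using ((hasDerivAt_id (0:ℝ)).mul_const (v n.1 n.2)).const_add (ω n.1 n.2)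
  have hφ0 : φ 0 = fun p => A₀.mulVec (ω p.1) p.2 := by funext p; simp [hφdef]
  have hψ0 : ψ 0 = fun p => ω p.1 p.2 := by funext p; simp [hψdef]
  have hderφ := evalDeriv f φ (fun n => A₀.mulVec (v n.1) n.2) 0 hφd
  have hderψ := evalDeriv f ψ (fun n => v n.1 n.2) 0 hψd
  have heq : (fun t => eval (φ t) f) = (fun t => eval (ψ t) f) := by
    funext t
    have h := hf A₀ h1 h2 (fun i => ω i + t • v i)
    have e1 : (fun p : Fin k × Fin 3 => A₀.mulVec ((fun i => ω i + t • v i) p.1) p.2) = φ t := by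
      funext p
      simp [hφdef, Matrix.mulVec_add, Matrix.mulVec_smul, smul_eq_mul, mul_comm]
    have e2 : (fun p : Fin k × Fin 3 => ((fun i => ω i + t • v i) p.1) p.2) = ψ t := by
      funext p; simp [hψdef, smul_eq_mul, mul_comm]
    rw [e1, e2] at h
    exact h
  rw [heq] at hderφ
  have := hderψ.unique hderφ
  rw [hφ0] at this
  rw [hψ0] at this
  exact this.symm

lemma dualMat_fst (A₀ A₁ : Matrix (Fin 3) (Fin 3) ℝ) (i j : Fin 3) :
    ((dualMat A₀ A₁) i j).fst = A₀ i j := by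
  simp [dualMat, TrivSqZeroExt.algebraMap_eq_inl, smul_eq_mul, TrivSqZeroExt.fst_mul,
    DualNumber.fst_eps]

lemma dualMat_snd (A₀ A₁ : Matrix (Fin 3) (Fin 3) ℝ) (i j : Fin 3) :
    ((dualMat A₀ A₁) i j).snd = A₁ i j := by
  simp [dualMat, TrivSqZeroExt.algebraMap_eq_inl, smul_eq_mul, TrivSqZeroExt.snd_mul,
    DualNumber.fst_eps, DualNumber.snd_eps]

lemma primal_orth (A₀ A₁ : Matrix (Fin 3) (Fin 3) ℝ)
    (hA : dualMat A₀ A₁ * (dualMat A₀ A₁)ᵀ = 1) : A₀ * A₀ᵀ = 1 := by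
  ext i j
  have h := congrArg TrivSqZeroExt.fst (congrFun (congrFun hA i) j)
  simp only [Matrix.mul_apply, TrivSqZeroExt.fst_sum, TrivSqZeroExt.fst_mul,
    Matrix.transpose_apply, dualMat_fst] at h
  simpa [Matrix.mul_apply, Matrix.one_apply, TrivSqZeroExt.fst_one,
    apply_ite TrivSqZeroExt.fst] using h

lemma primal_det (A₀ A₁ : Matrix (Fin 3) (Fin 3) ℝ)
    (hdet : (dualMat A₀ A₁).det = 1) : A₀.det = 1 := by
  have h := congrArg TrivSqZeroExt.fst hdet
  rw [show (TrivSqZeroExt.fst (R := ℝ) (M := ℝ)) ((dualMat A₀ A₁).det)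
      = ((TrivSqZeroExt.fstHom ℝ ℝ ℝ).toRingHom.mapMatrix (dualMat A₀ A₁)).det by
    rw [← RingHom.map_det]; rfl] at h
  have : (TrivSqZeroExt.fstHom ℝ ℝ ℝ).toRingHom.mapMatrix (dualMat A₀ A₁) = A₀ := by
    ext i j; simpa using dualMat_fst A₀ A₁ i j
  rw [this] at h
  simpa using h

lemma dual_orth (A₀ A₁ : Matrix (Fin 3) (Fin 3) ℝ)
    (hA : dualMat A₀ A₁ * (dualMat A₀ A₁)ᵀ = 1) :
    A₁ * A₀ᵀ + (A₁ * A₀ᵀ)ᵀ = 0 := by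
  have key : A₀ * A₁ᵀ + A₁ * A₀ᵀ = 0 := by
    ext i j
    have h := congrArg TrivSqZeroExt.snd (congrFun (congrFun hA i) j)
    simp only [Matrix.mul_apply, TrivSqZeroExt.snd_sum, TrivSqZeroExt.snd_mul,
      Matrix.transpose_apply, dualMat_fst, dualMat_snd, smul_eq_mul,
      MulOpposite.smul_eq_mul_unop, MulOpposite.unop_op] at h
    simp only [Matrix.add_apply, Matrix.mul_apply, Matrix.transpose_apply, Matrix.zero_apply]
    rw [← Finset.sum_add_distrib]
    simpa [Matrix.one_apply, apply_ite TrivSqZeroExt.snd] using h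
  have := congrArg Matrix.transpose key
  calc A₁ * A₀ᵀ + (A₁ * A₀ᵀ)ᵀ = A₀ * A₁ᵀ + A₁ * A₀ᵀ := by
        rw [Matrix.transpose_mul, Matrix.transpose_transpose, add_comm]
    _ = 0 := key

/-- The dualisation of a `k`-fold invariant of `SO(3)` is a dual `k`-fold invariant
of `SO(3,𝔻)`: for any dual matrix `Â = A₀ + ε·A₁` with `Â·Âᵀ = I` and `det Â = 1`,
`f̂(Â·û₁,…,Â·û_k) = f̂(û₁,…,û_k)`, where `Â·ûᵢ` has primal part `A₀ωᵢ` and dual part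
`A₁ωᵢ + A₀vᵢ`. -/
theorem fhat_invariant_of_SO3_invariant {k : ℕ}
    (f : MvPolynomial (Fin k × Fin 3) ℝ)
    (hf : ∀ A : Matrix (Fin 3) (Fin 3) ℝ, A * Aᵀ = 1 → A.det = 1 →
      ∀ ω : Fin k → Fin 3 → ℝ,
        MvPolynomial.eval (fun p => A.mulVec (ω p.1) p.2) f
          = MvPolynomial.eval (fun p => ω p.1 p.2) f)
    (A₀ A₁ : Matrix (Fin 3) (Fin 3) ℝ)
    (hA : dualMat A₀ A₁ * (dualMat A₀ A₁)ᵀ = 1)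
    (hdet : (dualMat A₀ A₁).det = 1)
    (ω v : Fin k → Fin 3 → ℝ) :
    fhat f (fun i => A₀.mulVec (ω i)) (fun i => A₁.mulVec (ω i) + A₀.mulVec (v i))
      = fhat f ω v := by
  have h1 : A₀ * A₀ᵀ = 1 := primal_orth A₀ A₁ hA
  have h2 : A₀.det = 1 := primal_det A₀ A₁ hdet
  have hMskew : (A₁ * A₀ᵀ) + (A₁ * A₀ᵀ)ᵀ = 0 := dual_orth A₀ A₁ hA
  have hMA : (A₁ * A₀ᵀ) * A₀ = A₁ := by
    have h1' : A₀ᵀ * A₀ = 1 := mul_eq_one_comm.mp h1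
    rw [Matrix.mul_assoc, h1', Matrix.mul_one]
  have hp : MvPolynomial.eval (fun p : Fin k × Fin 3 => A₀.mulVec (ω p.1) p.2) f
      = MvPolynomial.eval (fun p : Fin k × Fin 3 => ω p.1 p.2) f := hf A₀ h1 h2 ω
  have hT1 : (∑ i : Fin k, ∑ r : Fin 3,
      eval (fun p : Fin k × Fin 3 => A₀.mulVec (ω p.1) p.2) (pderiv (i, r) f)
        * A₁.mulVec (ω i) r) = 0 := by
    have h := inf_inv f hf (fun i => A₀.mulVec (ω i)) (A₁ * A₀ᵀ) hMskew
    have he : ∀ (i : Fin k) (r : Fin 3),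
        (A₁ * A₀ᵀ).mulVec (A₀.mulVec (ω i)) r = A₁.mulVec (ω i) r := by
      intro i r
      rw [Matrix.mulVec_mulVec, hMA]
    calc (∑ i : Fin k, ∑ r : Fin 3,
        eval (fun p : Fin k × Fin 3 => A₀.mulVec (ω p.1) p.2) (pderiv (i, r) f)
          * A₁.mulVec (ω i) r)
        = ∑ i : Fin k, ∑ r : Fin 3,
          eval (fun p : Fin k × Fin 3 => A₀.mulVec (ω p.1) p.2) (pderiv (i, r) f)
            * (A₁ * A₀ᵀ).mulVec (A₀.mulVec (ω i)) r := by
          apply Finset.sum_congr rfl; intro i _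
          apply Finset.sum_congr rfl; intro r _
          rw [he]
      _ = 0 := h
  have hT2 : (∑ i : Fin k, ∑ r : Fin 3,
      eval (fun p : Fin k × Fin 3 => A₀.mulVec (ω p.1) p.2) (pderiv (i, r) f)
        * A₀.mulVec (v i) r)
      = ∑ i : Fin k, ∑ r : Fin 3,
        eval (fun p : Fin k × Fin 3 => ω p.1 p.2) (pderiv (i, r) f) * v i r := by
    have h := chain f hf A₀ h1 h2 ω v
    rw [Fintype.sum_prod_type] at h
    rw [Fintype.sum_prod_type] at h
    exact h
  have hd : (∑ i : Fin k, ∑ r : Fin 3,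
      eval (fun p : Fin k × Fin 3 => A₀.mulVec (ω p.1) p.2) (pderiv (i, r) f)
        * (A₁.mulVec (ω i) + A₀.mulVec (v i)) r)
      = ∑ i : Fin k, ∑ r : Fin 3,
        eval (fun p : Fin k × Fin 3 => ω p.1 p.2) (pderiv (i, r) f) * v i r := by
    have : ∀ (i : Fin k) (r : Fin 3),
        eval (fun p : Fin k × Fin 3 => A₀.mulVec (ω p.1) p.2) (pderiv (i, r) f)
          * (A₁.mulVec (ω i) + A₀.mulVec (v i)) r
        = eval (fun p : Fin k × Fin 3 => A₀.mulVec (ω p.1) p.2) (pderiv (i, r) f)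
            * A₁.mulVec (ω i) r
          + eval (fun p : Fin k × Fin 3 => A₀.mulVec (ω p.1) p.2) (pderiv (i, r) f)
            * A₀.mulVec (v i) r := by
      intro i r; rw [Pi.add_apply]; ring
    simp only [this, Finset.sum_add_distrib]
    rw [hT1, hT2, zero_add]
  simp only [fhat]
  rw [hp, hd]
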